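/- Let f : F_2^n → {-1,1} and let B be a symmetric n×n matrix over F_2 with zero diagonal such that E_y f̂_y^2(By) ≥ ε. Then there exists a quadratic polynomial g over F_2 (i.e., a function g(x) = (-1)^{⟨x,Ax⟩ + ⟨x,α⟩ + a} with A + A^T = B) whose distance from f is at most 1/2 − ε/2, i.e., |E_x f(x)g(x)| ≥ ε (up to a constant). -/

import Mathlib

open Finset

/-- The character `(-1)^{⟨α,x⟩}` on `F_2^n`. -/
noncomputable def chi {n : ℕ} (α x : Fin n → ZMod 2) : ℝ :=
  (-1 : ℝ) ^ ((∑ i, α i * x i : ZMod 2)).val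

/-- Fourier coefficient `f̂(α) = E_x f(x)(-1)^{⟨α,x⟩}`. -/
noncomputable def fCoeff {n : ℕ} (f : (Fin n → ZMod 2) → ℝ) (α : Fin n → ZMod 2) : ℝ :=
  (∑ x, f x * chi α x) / 2 ^ n

/-- Discrete derivative `f_y(x) = f(x) f(x+y)`. -/
noncomputable def dderiv {n : ℕ} (f : (Fin n → ZMod 2) → ℝ) (y : Fin n → ZMod 2) :
    (Fin n → ZMod 2) → ℝ := fun x => f x * f (x + y)

/-- `‖f‖_{U_d}^{2^d} = E_{x,y_1,…,y_d} ∏_{S ⊆ [d]} f(x + Σ_{i∈S} y_i)`. -/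
noncomputable def gowersPow {n : ℕ} (d : ℕ) (f : (Fin n → ZMod 2) → ℝ) : ℝ :=
  (∑ x : Fin n → ZMod 2, ∑ y : Fin d → Fin n → ZMod 2,
      ∏ S : Finset (Fin d), f (x + ∑ i ∈ S, y i)) / ((2 : ℝ) ^ n) ^ (d + 1)

/-- The Gowers uniformity norm `‖f‖_{U_d}`. -/
noncomputable def gowersNorm {n : ℕ} (d : ℕ) (f : (Fin n → ZMod 2) → ℝ) : ℝ :=
  gowersPow d f ^ ((1 : ℝ) / 2 ^ d)

/-! ### Auxiliary lemmas -/

lemma zmod2_em (a : ZMod 2) : a = 0 ∨ a = 1 := by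
  revert a; decide

lemma zmod2_add_self (a : ZMod 2) : a + a = 0 := by
  revert a; decide

lemma e_add (a b : ZMod 2) : ((-1:ℝ))^(a+b).val = (-1)^a.val * (-1)^b.val := by
  have h2 : (1 + 1 : ZMod 2) = 0 := rfl
  have h0 : (0 : ZMod 2).val = 0 := rfl
  have h1 : (1 : ZMod 2).val = 1 := rfl
  rcases zmod2_em a with ha|ha <;> rcases zmod2_em b with hb|hb <;> subst ha <;> subst hb <;>
    simp [h2, h0, h1]

lemma e_pm (a : ZMod 2) : ((-1:ℝ))^a.val = 1 ∨ ((-1:ℝ))^a.val = -1 := by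
  rcases zmod2_em a with ha|ha <;> subst ha <;> norm_num [ZMod.val_one]

lemma e_sq (a : ZMod 2) : ((-1:ℝ))^a.val * ((-1:ℝ))^a.val = 1 := by
  rcases e_pm a with h|h <;> rw [h] <;> norm_num

lemma chi_eq_dot {n : ℕ} (α x : Fin n → ZMod 2) :
    chi α x = (-1 : ℝ) ^ (dotProduct α x).val := rfl

lemma chi_add_right {n : ℕ} (α x y : Fin n → ZMod 2) : chi α (x+y) = chi α x * chi α y := by
  unfold chi
  rw [← e_add]
  congr 2
  rw [← Finset.sum_add_distrib]
  exact Finset.sum_congr rfl fun i _ => by simp [mul_add]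

lemma chi_add_left {n : ℕ} (α β x : Fin n → ZMod 2) : chi (α+β) x = chi α x * chi β x := by
  unfold chi
  rw [← e_add]
  congr 2
  rw [← Finset.sum_add_distrib]
  exact Finset.sum_congr rfl fun i _ => by simp [add_mul]

lemma chi_comm {n : ℕ} (α x : Fin n → ZMod 2) : chi α x = chi x α := by
  unfold chi; congr 2
  exact Finset.sum_congr rfl fun i _ => mul_comm _ _

lemma chi_zero {n : ℕ} (α : Fin n → ZMod 2) : chi α 0 = 1 := by
  unfold chi; simp [ZMod.val_one]

lemma chi_pm {n : ℕ} (α x : Fin n → ZMod 2) : chi α x = 1 ∨ chi α x = -1 := e_pm _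

lemma card_univ_fn (n : ℕ) : (Finset.univ : Finset (Fin n → ZMod 2)).card = 2^n := by
  simp [Finset.card_univ]

lemma vadd_self {n : ℕ} (v : Fin n → ZMod 2) : v + v = 0 :=
  funext fun i => zmod2_add_self (v i)

lemma vadd_eq_zero_iff {n : ℕ} (u v : Fin n → ZMod 2) : u + v = 0 ↔ v = u := by
  constructor
  · intro h
    have := congrArg (· + u) h
    simpa [add_assoc, add_comm u v, vadd_self, zero_add, add_zero] using this
  · rintro rfl; exact vadd_self _

lemma chi_sum {n : ℕ} (z : Fin n → ZMod 2) :
    ∑ α : Fin n → ZMod 2, chi α z = if z = 0 then (2:ℝ)^n else 0 := by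
  by_cases hz : z = 0
  · subst hz
    simp [chi_zero, card_univ_fn]
  · simp only [hz, if_false]
    obtain ⟨i0, hi0⟩ : ∃ i, z i ≠ 0 := by
      by_contra hc; push_neg at hc; exact hz (funext fun i => hc i)
    have hz1 : z i0 = 1 := (zmod2_em (z i0)).resolve_left hi0
    set c : Fin n → ZMod 2 := Pi.single i0 1 with hc
    have hchic : chi c z = -1 := by
      unfold chi
      have : (∑ i, c i * z i) = z i0 := by
        rw [hc]
        rw [Finset.sum_eq_single i0]
        · simp
        · intro b _ hb; simp [Pi.single_apply, hb]
        · simp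
      rw [this, hz1]
      norm_num [ZMod.val_one]
    have key : ∑ α : Fin n → ZMod 2, chi α z = ∑ α : Fin n → ZMod 2, chi (c + α) z :=
      (Fintype.sum_equiv (Equiv.addLeft c) _ _ (fun α => rfl)).symm
    have : ∑ α : Fin n → ZMod 2, chi α z = - ∑ α : Fin n → ZMod 2, chi α z := by
      nth_rewrite 1 [key]
      rw [← Finset.sum_neg_distrib]
      exact Finset.sum_congr rfl fun α _ => by rw [chi_add_left, hchic]; ring
    linarith

lemma inversion {n : ℕ} (h : (Fin n → ZMod 2) → ℝ) (y : Fin n → ZMod 2) :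
    ∑ α : Fin n → ZMod 2, (∑ x, h x * chi α x)^2 * chi α y
      = 2^n * ∑ x, h x * h (x + y) := by
  have step : ∀ α : Fin n → ZMod 2, (∑ x, h x * chi α x)^2 * chi α y
      = ∑ x : Fin n → ZMod 2, ∑ x' : Fin n → ZMod 2, h x * h x' * chi α (x + x' + y) := by
    intro α
    rw [sq, Finset.sum_mul_sum, Finset.sum_mul]
    refine Finset.sum_congr rfl fun x _ => ?_
    rw [Finset.sum_mul]
    refine Finset.sum_congr rfl fun x' _ => ?_
    rw [chi_add_right, chi_add_right]; ring
  rw [Finset.sum_congr rfl fun α _ => step α]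
  rw [Finset.sum_comm]
  have step2 : ∀ x : Fin n → ZMod 2,
      ∑ α : Fin n → ZMod 2, ∑ x' : Fin n → ZMod 2, h x * h x' * chi α (x + x' + y)
      = 2^n * (h x * h (x + y)) := by
    intro x
    rw [Finset.sum_comm]
    have inner : ∀ x' : Fin n → ZMod 2,
        ∑ α : Fin n → ZMod 2, h x * h x' * chi α (x + x' + y)
        = if x' = x + y then 2^n * (h x * h (x+y)) else 0 := by
      intro x'
      rw [← Finset.mul_sum, chi_sum]
      have hcond : (x + x' + y = 0) ↔ (x' = x + y) := by
        rw [show x + x' + y = (x + y) + x' by abel]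
        exact vadd_eq_zero_iff _ _
      rw [if_congr hcond rfl rfl]
      split_ifs with hx'
      · rw [hx']; ring
      · ring
    rw [Finset.sum_congr rfl fun x' _ => inner x']
    simp
  rw [Finset.sum_congr rfl fun x _ => step2 x, ← Finset.mul_sum]

lemma parseval {n : ℕ} (h : (Fin n → ZMod 2) → ℝ) (hh : ∀ x, h x * h x = 1) :
    ∑ α : Fin n → ZMod 2, (∑ x, h x * chi α x)^2 = 2^n * 2^n := by
  have key := inversion h 0
  have : ∀ α : Fin n → ZMod 2, (∑ x, h x * chi α x)^2 * chi α 0 = (∑ x, h x * chi α x)^2 := by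
    intro α
    rw [chi_zero, mul_one]
  rw [← Finset.sum_congr rfl fun α _ => this α, key]
  have : ∀ x : Fin n → ZMod 2, h x * h (x + 0) = 1 := by
    intro x; rw [add_zero]; exact hh x
  rw [Finset.sum_congr rfl fun x _ => this x]
  simp [Finset.card_univ]

lemma sum_sq {n : ℕ} (h : (Fin n → ZMod 2) → ℝ) :
    (2:ℝ)^n * ∑ y : Fin n → ZMod 2, (∑ x, h x * h (x + y))^2
      = ∑ α : Fin n → ZMod 2, (∑ x, h x * chi α x)^4 := by
  have key : ∀ y : Fin n → ZMod 2, (2:ℝ)^n * ∑ x, h x * h (x + y)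
      = ∑ α : Fin n → ZMod 2, (∑ x, h x * chi α x)^2 * chi α y := (fun y => (inversion h y).symm)
  have lhs : (2:ℝ)^n * ((2:ℝ)^n * ∑ y : Fin n → ZMod 2, (∑ x, h x * h (x + y))^2)
      = ∑ y : Fin n → ZMod 2, (2^n * ∑ x, h x * h (x + y)) * (2^n * ∑ x, h x * h (x + y)) := by
    rw [Finset.mul_sum, Finset.mul_sum]
    exact Finset.sum_congr rfl fun y _ => by ring
  have rhs : ∑ y : Fin n → ZMod 2, (2^n * ∑ x, h x * h (x + y)) * ((2:ℝ)^n * ∑ x, h x * h (x + y))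
      = 2^n * ∑ α : Fin n → ZMod 2, (∑ x, h x * chi α x)^4 := by
    calc ∑ y : Fin n → ZMod 2, (2^n * ∑ x, h x * h (x + y)) * ((2:ℝ)^n * ∑ x, h x * h (x + y))
        = ∑ y : Fin n → ZMod 2, (∑ α : Fin n → ZMod 2, (∑ x, h x * chi α x)^2 * chi α y)
            * (∑ β : Fin n → ZMod 2, (∑ x, h x * chi β x)^2 * chi β y) :=
          Finset.sum_congr rfl fun y _ => by rw [key y]
      _ = ∑ y : Fin n → ZMod 2, ∑ α : Fin n → ZMod 2, ∑ β : Fin n → ZMod 2,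
            ((∑ x, h x * chi α x)^2 * (∑ x, h x * chi β x)^2) * chi (α + β) y := by
          refine Finset.sum_congr rfl fun y _ => ?_
          rw [Finset.sum_mul_sum]
          exact Finset.sum_congr rfl fun α _ => Finset.sum_congr rfl fun β _ => by
            rw [chi_add_left]; ring
      _ = ∑ α : Fin n → ZMod 2, ∑ β : Fin n → ZMod 2,
            ((∑ x, h x * chi α x)^2 * (∑ x, h x * chi β x)^2) *
              (∑ y : Fin n → ZMod 2, chi y (α + β)) := by
          rw [Finset.sum_comm]
          refine Finset.sum_congr rfl fun α _ => ?_
          rw [Finset.sum_comm]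
          refine Finset.sum_congr rfl fun β _ => ?_
          rw [Finset.mul_sum]
          exact Finset.sum_congr rfl fun y _ => by rw [chi_comm]
      _ = ∑ α : Fin n → ZMod 2, ∑ β : Fin n → ZMod 2,
            ((∑ x, h x * chi α x)^2 * (∑ x, h x * chi β x)^2) *
              (if β = α then (2:ℝ)^n else 0) := by
          refine Finset.sum_congr rfl fun α _ => Finset.sum_congr rfl fun β _ => ?_
          rw [chi_sum, if_congr (vadd_eq_zero_iff α β) rfl rfl]
      _ = ∑ α : Fin n → ZMod 2, (∑ x, h x * chi α x)^4 * 2^n := by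
          refine Finset.sum_congr rfl fun α _ => ?_
          rw [Finset.sum_eq_single α]
          · simp; ring
          · intro β _ hβ; simp [hβ]
          · simp
      _ = 2^n * ∑ α : Fin n → ZMod 2, (∑ x, h x * chi α x)^4 := by
          rw [Finset.mul_sum]; exact Finset.sum_congr rfl fun α _ => by ring
  have h2 : (2:ℝ)^n ≠ 0 := by positivity
  exact mul_left_cancel₀ h2 (lhs.trans rhs)

lemma quad_deriv {n : ℕ} (A : Matrix (Fin n) (Fin n) (ZMod 2)) (x y : Fin n → ZMod 2) :
    dotProduct (x + y) (A.mulVec (x + y))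
      = dotProduct x (A.mulVec x) + dotProduct x ((A + A.transpose).mulVec y)
        + dotProduct y (A.mulVec y) := by
  have hyx : dotProduct y (A.mulVec x) = dotProduct x (A.transpose.mulVec y) := by
    rw [Matrix.dotProduct_mulVec, Matrix.mulVec_transpose, dotProduct_comm]
  rw [Matrix.mulVec_add, add_dotProduct, dotProduct_add, dotProduct_add,
    hyx, Matrix.add_mulVec, dotProduct_add]
  abel

lemma build_A {n : ℕ} (B : Matrix (Fin n) (Fin n) (ZMod 2)) (hsymm : B.IsSymm)
    (hdiag : ∀ i, B i i = 0) :
    ∃ A : Matrix (Fin n) (Fin n) (ZMod 2), A + A.transpose = B := by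
  refine ⟨Matrix.of fun i j => if (i:ℕ) < (j:ℕ) then B i j else 0, ?_⟩
  ext i j
  simp only [Matrix.add_apply, Matrix.transpose_apply, Matrix.of_apply]
  rcases lt_trichotomy (i:ℕ) (j:ℕ) with hlt | heq | hgt
  · rw [if_pos hlt, if_neg (by omega), add_zero]
  · have hij : i = j := Fin.ext heq
    subst hij
    rw [if_neg (by omega), add_zero, hdiag]
  · rw [if_neg (by omega), if_pos hgt, zero_add]
    exact congrFun (congrFun hsymm i) j

open scoped Classical in
lemma count_lemma {n : ℕ} (f g : (Fin n → ZMod 2) → ℝ)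
    (hf : ∀ x, f x = 1 ∨ f x = -1) (hg : ∀ x, g x = 1 ∨ g x = -1) :
    ((univ.filter fun x : Fin n → ZMod 2 => f x ≠ g x).card : ℝ)
      = (2^n - ∑ x, f x * g x) / 2 := by
  have key : ∀ x : Fin n → ZMod 2, f x * g x = 1 - 2 * (if f x ≠ g x then (1:ℝ) else 0) := by
    intro x
    rcases hf x with h1 | h1 <;> rcases hg x with h2 | h2 <;> rw [h1, h2] <;> norm_num
  rw [Finset.sum_congr rfl fun x _ => key x, Finset.sum_sub_distrib]
  rw [← Finset.mul_sum, Finset.sum_boole]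
  have hcard : ((univ : Finset (Fin n → ZMod 2)).card : ℝ) = 2^n := by
    simp [Finset.card_univ]
  simp only [Finset.sum_const, nsmul_eq_mul, mul_one, hcard]
  ring

open scoped Classical in
/-- If `B` is symmetric with zero diagonal and `E_y f̂_y²(By) ≥ ε`, then there is a quadratic
polynomial `g(x) = (-1)^{⟨x,Ax⟩+⟨x,α⟩+a}` with `A + Aᵀ = B` whose distance from `f` is at most
`1/2 - ε/2`. -/
theorem close_to_quadratic_of_symmetric_matrix {n : ℕ} (f : (Fin n → ZMod 2) → ℝ)
    (hf : ∀ x, f x = 1 ∨ f x = -1) (B : Matrix (Fin n) (Fin n) (ZMod 2))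
    (hsymm : B.IsSymm) (hdiag : ∀ i, B i i = 0) (ε : ℝ) (hε : 0 < ε)
    (h : ε ≤ (∑ y : Fin n → ZMod 2, fCoeff (dderiv f y) (B.mulVec y) ^ 2) / 2 ^ n) :
    ∃ (A : Matrix (Fin n) (Fin n) (ZMod 2)) (α : Fin n → ZMod 2) (a : ZMod 2),
      A + A.transpose = B ∧
      ((univ.filter fun x : Fin n → ZMod 2 =>
          f x ≠ (-1 : ℝ) ^ (dotProduct x (A.mulVec x) + dotProduct x α + a).val).card : ℝ)
        / 2 ^ n ≤ 1 / 2 - ε / 2 := by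
  obtain ⟨A, hA⟩ := build_A B hsymm hdiag
  set H : (Fin n → ZMod 2) → ℝ :=
    fun x => f x * (-1 : ℝ) ^ (dotProduct x (A.mulVec x)).val with hH
  have hHsq : ∀ x, H x * H x = 1 := by
    intro x
    have hff : f x * f x = 1 := by rcases hf x with h1 | h1 <;> rw [h1] <;> norm_num
    have hee := e_sq (dotProduct x (A.mulVec x))
    show (f x * _) * (f x * _) = 1
    calc (f x * (-1:ℝ) ^ (dotProduct x (A.mulVec x)).val)
          * (f x * (-1:ℝ) ^ (dotProduct x (A.mulVec x)).val)
        = (f x * f x) * ((-1:ℝ) ^ (dotProduct x (A.mulVec x)).val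
            * (-1:ℝ) ^ (dotProduct x (A.mulVec x)).val) := by ring
      _ = 1 := by rw [hff, hee, mul_one]
  have hHpm : ∀ x, H x = 1 ∨ H x = -1 := by
    intro x
    rcases hf x with h1 | h1 <;> rcases e_pm (dotProduct x (A.mulVec x)) with h2 | h2 <;>
      [left; right; right; left] <;> rw [hH] <;> simp only [h1, h2] <;> norm_num
  have hpow : (0:ℝ) < 2^n := by positivity
  -- derivative identity
  have hDeriv : ∀ y x : Fin n → ZMod 2,
      H x * H (x + y) = dderiv f y x * chi (B.mulVec y) x
        * (-1 : ℝ) ^ (dotProduct y (A.mulVec y)).val := by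
    intro y x
    have hq : dotProduct (x+y) (A.mulVec (x+y))
        = dotProduct x (A.mulVec x)
          + (dotProduct x (B.mulVec y) + dotProduct y (A.mulVec y)) := by
      rw [quad_deriv A x y, hA, add_assoc]
    have hchi : chi (B.mulVec y) x = (-1:ℝ) ^ (dotProduct x (B.mulVec y)).val := by
      rw [chi_eq_dot, dotProduct_comm]
    rw [hH]
    show (f x * _) * (f (x+y) * _) = _
    rw [hq, e_add, e_add, hchi]
    have : (-1:ℝ) ^ (dotProduct x (A.mulVec x)).val *
        ((-1:ℝ) ^ (dotProduct x (A.mulVec x)).val) = 1 := e_sq _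
    unfold dderiv
    linear_combination (f x * f (x + y) * ((-1:ℝ) ^ (dotProduct x (B.mulVec y)).val)
      * ((-1:ℝ) ^ (dotProduct y (A.mulVec y)).val)) * this
  -- the key sum
  have hGsq : ∀ y : Fin n → ZMod 2,
      (∑ x, H x * H (x + y))^2 = (2^n)^2 * fCoeff (dderiv f y) (B.mulVec y) ^ 2 := by
    intro y
    have : ∑ x, H x * H (x + y)
        = (∑ x, dderiv f y x * chi (B.mulVec y) x)
            * (-1 : ℝ) ^ (dotProduct y (A.mulVec y)).val := by
      rw [Finset.sum_mul]
      exact Finset.sum_congr rfl fun x _ => hDeriv y x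
    rw [this, mul_pow]
    have he : ((-1 : ℝ) ^ (dotProduct y (A.mulVec y)).val)^2 = 1 := by
      rw [sq]; exact e_sq _
    rw [he, mul_one]
    unfold fCoeff
    rw [div_pow]
    field_simp
  -- lower bound on the fourth moment
  have hsum4 : ε * (2^n)^4 ≤ ∑ α : Fin n → ZMod 2, (∑ x, H x * chi α x)^4 := by
    rw [← sum_sq H]
    have h1 : ε * 2^n ≤ ∑ y : Fin n → ZMod 2, fCoeff (dderiv f y) (B.mulVec y) ^ 2 :=
      (le_div_iff₀ hpow).mp h
    have h2 : ∑ y : Fin n → ZMod 2, (∑ x, H x * H (x + y))^2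
        = (2^n)^2 * ∑ y : Fin n → ZMod 2, fCoeff (dderiv f y) (B.mulVec y) ^ 2 := by
      rw [Finset.mul_sum]
      exact Finset.sum_congr rfl fun y _ => hGsq y
    rw [h2]
    calc ε * (2^n)^4 = 2^n * ((2^n)^2 * (ε * 2^n)) := by ring
      _ ≤ 2^n * ((2^n)^2 * ∑ y : Fin n → ZMod 2, fCoeff (dderiv f y) (B.mulVec y) ^ 2) := by
          apply mul_le_mul_of_nonneg_left _ (le_of_lt hpow)
          apply mul_le_mul_of_nonneg_left h1 (by positivity)
  -- choose maximizing α₀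
  obtain ⟨α₀, -, hmax⟩ := Finset.exists_max_image (univ : Finset (Fin n → ZMod 2))
    (fun α => (∑ x, H x * chi α x)^2) Finset.univ_nonempty
  set t : ℝ := ∑ x, H x * chi α₀ x with ht
  have hbound : ∑ α : Fin n → ZMod 2, (∑ x, H x * chi α x)^4 ≤ t^2 * (2^n * 2^n) := by
    rw [← parseval H hHsq, Finset.mul_sum]
    apply Finset.sum_le_sum
    intro β _
    have : (∑ x, H x * chi β x)^4 = (∑ x, H x * chi β x)^2 * (∑ x, H x * chi β x)^2 := by ring
    rw [this]
    exact mul_le_mul_of_nonneg_right (hmax β (Finset.mem_univ β)) (sq_nonneg _)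
  have ht2 : ε * (2^n)^2 ≤ t^2 := by
    have := hsum4.trans hbound
    nlinarith [hpow]
  -- |t| ≤ 2^n
  have htle : |t| ≤ 2^n := by
    rw [ht]
    calc |∑ x, H x * chi α₀ x| ≤ ∑ x, |H x * chi α₀ x| := Finset.abs_sum_le_sum_abs _ _
      _ = ∑ x : Fin n → ZMod 2, 1 := by
          refine Finset.sum_congr rfl fun x _ => ?_
          rw [abs_mul]
          rcases hHpm x with h1 | h1 <;> rcases chi_pm α₀ x with h2 | h2 <;>
            rw [h1, h2] <;> norm_num
      _ = 2^n := by simp [Finset.card_univ]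
  have hεt : ε * 2^n ≤ |t| := by
    have h1 : t^2 ≤ (2^n)^2 := by
      rw [← sq_abs t]
      exact pow_le_pow_left₀ (abs_nonneg t) htle 2
    have hsq : (0:ℝ) < (2^n)^2 := by positivity
    have hε1 : ε ≤ 1 := by nlinarith [ht2, h1, hsq]
    nlinarith [sq_abs t, abs_nonneg t, hpow, ht2, hε1, mul_pos hε hpow, hsq]
  -- choose a
  set a : ZMod 2 := if 0 ≤ t then 0 else 1 with ha
  have hea : (-1:ℝ)^a.val * t = |t| := by
    rw [ha]
    split_ifs with h0
    · simp [ZMod.val_one, abs_of_nonneg h0]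
    · push_neg at h0
      have : ((1 : ZMod 2)).val = 1 := rfl
      rw [this, abs_of_neg h0]; ring
  refine ⟨A, α₀, a, hA, ?_⟩
  set g : (Fin n → ZMod 2) → ℝ :=
    fun x => (-1 : ℝ) ^ (dotProduct x (A.mulVec x) + dotProduct x α₀ + a).val
    with hg
  have hgpm : ∀ x, g x = 1 ∨ g x = -1 := fun x => e_pm _
  have hfg : ∀ x, f x * g x = H x * chi α₀ x * (-1:ℝ)^a.val := by
    intro x
    rw [hg]
    show f x * (-1 : ℝ) ^ (dotProduct x (A.mulVec x) + dotProduct x α₀ + a).val = _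
    rw [e_add, e_add, hH]
    have hchi : chi α₀ x = (-1:ℝ) ^ (dotProduct x α₀).val := by
      rw [chi_eq_dot, dotProduct_comm]
    rw [hchi]; ring
  have hsumfg : ∑ x, f x * g x = |t| := by
    rw [Finset.sum_congr rfl fun x _ => hfg x, ← Finset.sum_mul, ← ht, mul_comm, hea]
  have hcount := count_lemma f g hf hgpm
  rw [hsumfg] at hcount
  show ((univ.filter fun x : Fin n → ZMod 2 => f x ≠ g x).card : ℝ) / 2 ^ n ≤ 1 / 2 - ε / 2
  rw [hcount, div_le_iff₀ hpow]
  nlinarith [hεt, hpow]
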